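/- Let $\varepsilon>0$ and let $u:[-1,1]\to\mathbb{R}$ be continuous with $-1<u(x)\le 0$ for all $x\in[-1,1]$ and $u(\pm 1)=0$. Set $\Omega(u):=\{(x,z)\in\mathbb{R}^2:\,-1<x<1,\,-1<z<u(x)\}$. Let $\psi:\overline{\Omega(u)}\to\mathbb{R}$ be continuous on $\overline{\Omega(u)}$, twice continuously differentiable in $\Omega(u)$, satisfy $\varepsilon^2\,\partial_x^2\psi(x,z)+\partial_z^2\psi(x,z)=0$ for all $(x,z)\in\Omega(u)$, and $\psi(x,z)=\frac{1+z}{1+u(x)}$ for all $(x,z)\in\overline{\Omega(u)}\setminus\Omega(u)$. Then $1+z\;\le\;\psi(x,z)\;\le\;1$ for all $(x,z)\in\Omega(u)$. -/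

import Mathlib

/-- The open region `Ω(u)` between the ground plate `z = -1` and the graph of `u`. -/
def OmegaRegion (u : ℝ → ℝ) : Set (ℝ × ℝ) :=
  {p : ℝ × ℝ | p.1 ∈ Set.Ioo (-1:ℝ) 1 ∧ p.2 ∈ Set.Ioo (-1:ℝ) (u p.1)}

open Set Filter Topology


/-- If `g` is `C²` on an open set containing `a` and has a local max at `a`,
then its second derivative at `a` is nonpositive. -/
lemma second_deriv_nonpos_of_isLocalMax {g : ℝ → ℝ} {a : ℝ} {U : Set ℝ}
    (hU : IsOpen U) (ha : a ∈ U) (hg : ContDiffOn ℝ 2 g U)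
    (hmax : IsLocalMax g a) : deriv (deriv g) a ≤ 0 := by
  by_contra hpos
  push_neg at hpos
  have hd0 : deriv g a = 0 := hmax.deriv_eq_zero
  have hg' : ContDiffOn ℝ 1 (deriv g) U := hg.deriv_of_isOpen hU (by norm_num)
  have hdiff : DifferentiableAt ℝ (deriv g) a :=
    ((hg'.differentiableOn (by norm_num)).differentiableAt (hU.mem_nhds ha))
  have hda : HasDerivAt (deriv g) (deriv (deriv g) a) a := hdiff.hasDerivAt
  have hslope := hasDerivAt_iff_tendsto_slope.1 hda
  have hev : ∀ᶠ x in 𝓝[≠] a, 0 < slope (deriv g) a x :=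
    hslope.eventually (eventually_gt_nhds hpos)
  have hmono : 𝓝[>] a ≤ 𝓝[≠] a := nhdsWithin_mono a (fun x hx => ne_of_gt hx)
  have hev' : ∀ᶠ x in 𝓝[>] a, 0 < deriv g x := by
    filter_upwards [hev.filter_mono hmono, self_mem_nhdsWithin] with x hx hx'
    have hxa : (0:ℝ) < x - a := sub_pos.2 hx'
    have hs : slope (deriv g) a x = deriv g x / (x - a) := by
      rw [slope_def_field, hd0]
      ring
    rw [hs] at hx
    have h2 := mul_pos hx hxa
    rwa [div_mul_cancel₀ _ (ne_of_gt hxa)] at h2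
  have hevU : ∀ᶠ x in 𝓝[>] a, x ∈ U :=
    mem_nhdsWithin_of_mem_nhds (hU.mem_nhds ha)
  have hevM : ∀ᶠ x in 𝓝[>] a, g x ≤ g a := hmax.filter_mono nhdsWithin_le_nhds
  obtain ⟨b, hab, hIoo⟩ :=
    mem_nhdsGT_iff_exists_Ioo_subset.1 (hev'.and (hevU.and hevM))
  have hab' : a < b := hab
  set c := (a + b) / 2 with hc
  have hac : a < c := by simp only [hc]; linarith [hab']
  have hcb : c < b := by simp only [hc]; linarith [hab']
  have hsubU : Icc a c ⊆ U := by
    intro x hx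
    rcases eq_or_lt_of_le hx.1 with h | h
    · exact h ▸ ha
    · exact (hIoo ⟨h, lt_of_le_of_lt hx.2 hcb⟩).2.1
  have hmonoS : StrictMonoOn g (Icc a c) := by
    refine strictMonoOn_of_deriv_pos (convex_Icc a c) (hg.continuousOn.mono hsubU) ?_
    intro x hx
    rw [interior_Icc] at hx
    exact (hIoo ⟨hx.1, lt_trans hx.2 hcb⟩).1
  have hlt : g a < g c := hmonoS (left_mem_Icc.2 (le_of_lt hac))
    (right_mem_Icc.2 (le_of_lt hac)) hac
  have hge : g c ≤ g a := (hIoo ⟨hac, hcb⟩).2.2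
  linarith [hab']

/-- Second derivative of `c + d·x + e·m x` on an open set where `m` is `C²`. -/
lemma iteratedDeriv_two_affine {m : ℝ → ℝ} {U : Set ℝ} (hU : IsOpen U) {a : ℝ}
    (ha : a ∈ U) (hm : ContDiffOn ℝ 2 m U) (c d e : ℝ) :
    iteratedDeriv 2 (fun x => c + d * x + e * m x) a = e * iteratedDeriv 2 m a := by
  have hit : ∀ (f : ℝ → ℝ), iteratedDeriv 2 f = deriv (deriv f) := by
    intro f
    rw [iteratedDeriv_succ, iteratedDeriv_one]
  rw [hit, hit]
  have hder : ∀ x ∈ U, deriv (fun x => c + d * x + e * m x) x = d + e * deriv m x := by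
    intro x hx
    have hmx : HasDerivAt m (deriv m x) x :=
      ((hm.differentiableOn (by norm_num)).differentiableAt (hU.mem_nhds hx)).hasDerivAt
    have h1 : HasDerivAt (fun x : ℝ => c + d * x + e * m x) (d + e * deriv m x) x := by
      have := ((hasDerivAt_id x).const_mul d).const_add c
      have h2 := this.add (hmx.const_mul e)
      simp only [mul_one] at h2; exact h2
    exact h1.deriv
  have heq : deriv (fun x => c + d * x + e * m x) =ᶠ[𝓝 a]
      (fun x => d + e * deriv m x) :=
    eventually_of_mem (hU.mem_nhds ha) hder
  rw [heq.deriv_eq]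
  have hm' : DifferentiableAt ℝ (deriv m) a :=
    (((hm.deriv_of_isOpen hU (by norm_num) : ContDiffOn ℝ 1 (deriv m) U).differentiableOn (by norm_num)).differentiableAt
      (hU.mem_nhds ha))
  have h3 : HasDerivAt (fun x => d + e * deriv m x) (e * deriv (deriv m) a) a :=
    (hm'.hasDerivAt.const_mul e).const_add d
  exact h3.deriv

/-- Second derivative of `m x + η·x²` on an open set where `m` is `C²`. -/
lemma iteratedDeriv_two_add_sq {m : ℝ → ℝ} {U : Set ℝ} (hU : IsOpen U) {a : ℝ}
    (ha : a ∈ U) (hm : ContDiffOn ℝ 2 m U) (η : ℝ) :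
    iteratedDeriv 2 (fun x => m x + η * x ^ 2) a = iteratedDeriv 2 m a + 2 * η := by
  have hit : ∀ (f : ℝ → ℝ), iteratedDeriv 2 f = deriv (deriv f) := by
    intro f
    rw [iteratedDeriv_succ, iteratedDeriv_one]
  rw [hit, hit]
  have hder : ∀ x ∈ U, deriv (fun x => m x + η * x ^ 2) x = deriv m x + η * (2 * x) := by
    intro x hx
    have hmx : HasDerivAt m (deriv m x) x :=
      ((hm.differentiableOn (by norm_num)).differentiableAt (hU.mem_nhds hx)).hasDerivAt
    have hp : HasDerivAt (fun x : ℝ => η * x ^ 2) (η * (2 * x)) x := by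
      simpa using (hasDerivAt_pow 2 x).const_mul η
    exact (hmx.add hp).deriv
  have heq : deriv (fun x => m x + η * x ^ 2) =ᶠ[𝓝 a]
      (fun x => deriv m x + η * (2 * x)) := eventually_of_mem (hU.mem_nhds ha) hder
  rw [heq.deriv_eq]
  have hm' : DifferentiableAt ℝ (deriv m) a :=
    (((hm.deriv_of_isOpen hU (by norm_num) : ContDiffOn ℝ 1 (deriv m) U).differentiableOn (by norm_num)).differentiableAt
      (hU.mem_nhds ha))
  have h3 : HasDerivAt (fun x => deriv m x + η * (2 * x)) (deriv (deriv m) a + η * 2) a := by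
    have := ((hasDerivAt_id a).const_mul 2).const_mul η
    have h4 := hm'.hasDerivAt.add this
    simp only [mul_one] at h4; exact h4
  rw [h3.deriv]; ring

lemma iteratedDeriv_two_eq (f : ℝ → ℝ) : iteratedDeriv 2 f = deriv (deriv f) := by
  rw [iteratedDeriv_succ, iteratedDeriv_one]

lemma isOpen_omegaRegion {u : ℝ → ℝ} (huc : ContinuousOn u (Set.Icc (-1) 1)) :
    IsOpen (OmegaRegion u) := by
  rw [isOpen_iff_mem_nhds]
  rintro ⟨x, z⟩ ⟨hx, hz⟩
  have hcx : ContinuousAt u x := huc.continuousAt (Icc_mem_nhds hx.1 hx.2)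
  set c := (z + u x) / 2 with hcdef
  have hzc : z < c := by simp only [hcdef]; linarith [hz.2]
  have hcu : c < u x := by simp only [hcdef]; linarith [hz.2]
  have h1 : {y : ℝ | c < u y} ∈ 𝓝 x := hcx.preimage_mem_nhds (Ioi_mem_nhds hcu)
  have h2 : Set.Ioo (-1:ℝ) 1 ∈ 𝓝 x := Ioo_mem_nhds hx.1 hx.2
  have h3 : Set.Ioo (-1:ℝ) c ∈ 𝓝 z := Ioo_mem_nhds hz.1 hzc
  rw [nhds_prod_eq]
  refine mem_of_superset (Filter.prod_mem_prod (Filter.inter_mem h2 h1) h3) ?_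
  rintro ⟨y, w⟩ ⟨⟨hy1, hy2⟩, hw⟩
  exact ⟨hy1, hw.1, lt_trans hw.2 hy2⟩

lemma omegaRegion_subset_box {u : ℝ → ℝ}
    (hu0 : ∀ x ∈ Set.Icc (-1:ℝ) 1, u x ≤ 0) :
    OmegaRegion u ⊆ Set.Icc (-1:ℝ) 1 ×ˢ Set.Icc (-1:ℝ) 1 := by
  rintro ⟨x, z⟩ ⟨hx, hz⟩
  have hux : u x ≤ 0 := hu0 x ⟨le_of_lt hx.1, le_of_lt hx.2⟩
  exact ⟨⟨le_of_lt hx.1, le_of_lt hx.2⟩, ⟨le_of_lt hz.1, by linarith [hz.2]⟩⟩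

lemma isCompact_closure_omegaRegion {u : ℝ → ℝ}
    (hu0 : ∀ x ∈ Set.Icc (-1:ℝ) 1, u x ≤ 0) :
    IsCompact (closure (OmegaRegion u)) := by
  have hcomp : IsCompact (Set.Icc (-1:ℝ) 1 ×ˢ Set.Icc (-1:ℝ) 1) :=
    isCompact_Icc.prod isCompact_Icc
  exact hcomp.of_isClosed_subset isClosed_closure
    (closure_minimal (omegaRegion_subset_box hu0) (isClosed_Icc.prod isClosed_Icc))

lemma subsol_nonpos (ε : ℝ) (hε : 0 < ε) (u : ℝ → ℝ)
    (huc : ContinuousOn u (Set.Icc (-1) 1))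
    (hu0 : ∀ x ∈ Set.Icc (-1:ℝ) 1, u x ≤ 0)
    (f : ℝ → ℝ → ℝ)
    (hfc : ContinuousOn (fun p : ℝ × ℝ => f p.1 p.2) (closure (OmegaRegion u)))
    (hf2 : ContDiffOn ℝ 2 (fun p : ℝ × ℝ => f p.1 p.2) (OmegaRegion u))
    (hpde : ∀ p ∈ OmegaRegion u,
      ε ^ 2 * iteratedDeriv 2 (fun x => f x p.2) p.1 + iteratedDeriv 2 (f p.1) p.2 = 0)
    (hb : ∀ p ∈ closure (OmegaRegion u) \ OmegaRegion u, f p.1 p.2 ≤ 0) :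
    ∀ p ∈ OmegaRegion u, f p.1 p.2 ≤ 0 := by
  have hopen := isOpen_omegaRegion huc
  have hcomp := isCompact_closure_omegaRegion hu0
  intro p hp
  have key : ∀ η > 0, f p.1 p.2 ≤ η := by
    intro η hη
    set φ : ℝ × ℝ → ℝ := fun q => f q.1 q.2 + η * q.1 ^ 2 with hφdef
    have hφc : ContinuousOn φ (closure (OmegaRegion u)) :=
      hfc.add (Continuous.continuousOn (by continuity))
    obtain ⟨q, hqcl, hqmax⟩ := hcomp.exists_isMaxOn ⟨p, subset_closure hp⟩ hφc
    by_cases hq : q ∈ OmegaRegion u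
    · exfalso
      have hloc : IsLocalMax φ q :=
        hqmax.isLocalMax (mem_of_superset (hopen.mem_nhds hq) subset_closure)
      -- horizontal line through q
      set U : Set ℝ := {x | (x, q.2) ∈ OmegaRegion u} with hUdef
      have hUopen : IsOpen U := hopen.preimage (by continuity)
      have hqU : q.1 ∈ U := by simpa [hUdef] using hq
      have hlineC : ContDiffOn ℝ 2 (fun x => f x q.2) U :=
        hf2.comp ((contDiff_id.prodMk contDiff_const).contDiffOn) (fun x hx => hx)
      have hgφC : ContDiffOn ℝ 2 (fun x => f x q.2 + η * x ^ 2) U :=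
        hlineC.add ((contDiff_const.mul (contDiff_id.pow 2)).contDiffOn)
      have hgmax : IsLocalMax (fun x => f x q.2 + η * x ^ 2) q.1 := by
        have hloc' : IsLocalMax φ (q.1, q.2) := by rwa [Prod.mk.eta]
        have ht : Filter.Tendsto (fun x : ℝ => (x, q.2)) (𝓝 q.1) (𝓝 (q.1, q.2)) :=
          (continuous_id.prodMk continuous_const).continuousAt
        exact IsMaxFilter.comp_tendsto (g := fun x : ℝ => (x, q.2)) (b := q.1) hloc' ht
      have hA : deriv (deriv (fun x => f x q.2 + η * x ^ 2)) q.1 ≤ 0 :=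
        second_deriv_nonpos_of_isLocalMax hUopen hqU hgφC hgmax
      rw [← iteratedDeriv_two_eq,
        iteratedDeriv_two_add_sq hUopen hqU hlineC η] at hA
      -- vertical line through q
      set V : Set ℝ := {z | (q.1, z) ∈ OmegaRegion u} with hVdef
      have hVopen : IsOpen V := hopen.preimage (by continuity)
      have hqV : q.2 ∈ V := by simpa [hVdef] using hq
      have hmlineC : ContDiffOn ℝ 2 (fun z => f q.1 z) V :=
        hf2.comp ((contDiff_const.prodMk contDiff_id).contDiffOn) (fun z hz => hz)
      have hhφC : ContDiffOn ℝ 2 (fun z => f q.1 z + η * q.1 ^ 2) V :=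
        hmlineC.add contDiffOn_const
      have hhmax : IsLocalMax (fun z => f q.1 z + η * q.1 ^ 2) q.2 := by
        have hloc' : IsLocalMax φ (q.1, q.2) := by rwa [Prod.mk.eta]
        have ht : Filter.Tendsto (fun z : ℝ => (q.1, z)) (𝓝 q.2) (𝓝 (q.1, q.2)) :=
          (continuous_const.prodMk continuous_id).continuousAt
        exact IsMaxFilter.comp_tendsto (g := fun z : ℝ => (q.1, z)) (b := q.2) hloc' ht
      have hB : deriv (deriv (fun z => f q.1 z + η * q.1 ^ 2)) q.2 ≤ 0 :=
        second_deriv_nonpos_of_isLocalMax hVopen hqV hhφC hhmax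
      rw [← iteratedDeriv_two_eq] at hB
      have hrw : (fun z => f q.1 z + η * q.1 ^ 2)
          = (fun z => (η * q.1 ^ 2) + 0 * z + 1 * f q.1 z) := by
        funext z; ring
      rw [hrw, iteratedDeriv_two_affine hVopen hqV hmlineC, one_mul] at hB
      have hp2 := hpde q hq
      have hε2 : 0 < ε ^ 2 := pow_pos hε 2
      nlinarith [mul_le_mul_of_nonneg_left hA (le_of_lt hε2), mul_pos hε2 hη]
    · have hfq : f q.1 q.2 ≤ 0 := hb q ⟨hqcl, hq⟩
      have hbox := closure_minimal (omegaRegion_subset_box hu0)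
        (isClosed_Icc.prod isClosed_Icc) hqcl
      have hq1 : q.1 ^ 2 ≤ 1 :=
        (sq_le_one_iff_abs_le_one q.1).2 (abs_le.2 ⟨hbox.1.1, hbox.1.2⟩)
      have hφp : φ p ≤ φ q := hqmax (subset_closure hp)
      simp only [hφdef] at hφp
      nlinarith [sq_nonneg p.1]
  by_contra hcon
  push_neg at hcon
  have := key (f p.1 p.2 / 2) (by linarith)
  linarith

lemma closure_omega_subset {u : ℝ → ℝ} (huc : ContinuousOn u (Set.Icc (-1) 1))
    (hu0 : ∀ x ∈ Set.Icc (-1:ℝ) 1, u x ≤ 0) :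
    closure (OmegaRegion u) ⊆
      (Set.Icc (-1:ℝ) 1 ×ˢ Set.Icc (-1:ℝ) 1) ∩ {p : ℝ × ℝ | p.2 ≤ u p.1} := by
  have hcont : ContinuousOn (fun p : ℝ × ℝ => u p.1 - p.2)
      (Set.Icc (-1:ℝ) 1 ×ˢ Set.Icc (-1:ℝ) 1) :=
    (huc.comp continuous_fst.continuousOn (fun p hp => hp.1)).sub
      continuous_snd.continuousOn
  have hcl : IsClosed ((Set.Icc (-1:ℝ) 1 ×ˢ Set.Icc (-1:ℝ) 1) ∩
      ((fun p : ℝ × ℝ => u p.1 - p.2) ⁻¹' Set.Ici 0)) :=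
    hcont.preimage_isClosed_of_isClosed (isClosed_Icc.prod isClosed_Icc) isClosed_Ici
  have hsub : OmegaRegion u ⊆ (Set.Icc (-1:ℝ) 1 ×ˢ Set.Icc (-1:ℝ) 1) ∩
      ((fun p : ℝ × ℝ => u p.1 - p.2) ⁻¹' Set.Ici 0) := by
    rintro ⟨x, z⟩ hxz
    refine ⟨omegaRegion_subset_box hu0 hxz, ?_⟩
    simp only [Set.mem_preimage, Set.mem_Ici, sub_nonneg]
    exact le_of_lt hxz.2.2
  intro q hq
  have := closure_minimal hsub hcl hq
  exact ⟨this.1, by simpa [sub_nonneg] using this.2⟩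


/-- Comparison bounds (2.5) of Proposition 2.3 in classical form: a solution of
`ε²∂ₓ²ψ + ∂_z²ψ = 0` in `Ω(u)` with boundary values `(1+z)/(1+u(x))` satisfies
`1 + z ≤ ψ(x,z) ≤ 1` in `Ω(u)`. -/
theorem stmt_7 (ε : ℝ) (hε : 0 < ε) (u : ℝ → ℝ) (ψ : ℝ → ℝ → ℝ)
    (huc : ContinuousOn u (Set.Icc (-1) 1))
    (hu : ∀ x ∈ Set.Icc (-1:ℝ) 1, -1 < u x ∧ u x ≤ 0)
    (hub : u (-1) = 0 ∧ u 1 = 0)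
    (hψc : ContinuousOn (fun p : ℝ × ℝ => ψ p.1 p.2) (closure (OmegaRegion u)))
    (hψ2 : ContDiffOn ℝ 2 (fun p : ℝ × ℝ => ψ p.1 p.2) (OmegaRegion u))
    (hpde : ∀ p ∈ OmegaRegion u,
      ε ^ 2 * iteratedDeriv 2 (fun x => ψ x p.2) p.1 + iteratedDeriv 2 (ψ p.1) p.2 = 0)
    (hbc : ∀ p ∈ closure (OmegaRegion u) \ OmegaRegion u,
      ψ p.1 p.2 = (1 + p.2) / (1 + u p.1)) :
    ∀ p ∈ OmegaRegion u, 1 + p.2 ≤ ψ p.1 p.2 ∧ ψ p.1 p.2 ≤ 1 := by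
  have hu0 : ∀ x ∈ Set.Icc (-1:ℝ) 1, u x ≤ 0 := fun x hx => (hu x hx).2
  have hopen := isOpen_omegaRegion huc
  -- boundary facts
  have hbd : ∀ q ∈ closure (OmegaRegion u) \ OmegaRegion u,
      0 < 1 + u q.1 ∧ 0 ≤ 1 + q.2 ∧ 1 + q.2 ≤ 1 + u q.1 := by
    intro q hq
    have hK := closure_omega_subset huc hu0 hq.1
    have h1 : q.1 ∈ Set.Icc (-1:ℝ) 1 := hK.1.1
    have h2 : -1 ≤ q.2 := hK.1.2.1
    have h3 : q.2 ≤ u q.1 := hK.2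
    exact ⟨by linarith [(hu q.1 h1).1], by linarith, by linarith⟩
  -- upper bound: ψ - 1 ≤ 0
  have hupper : ∀ p ∈ OmegaRegion u, ψ p.1 p.2 - 1 ≤ 0 := by
    refine subsol_nonpos ε hε u huc hu0 (fun x z => ψ x z - 1)
      (hψc.sub continuousOn_const) (hψ2.sub contDiffOn_const) ?_ ?_
    · intro p hp
      have hx : iteratedDeriv 2 (fun x => ψ x p.2 - 1) p.1
          = iteratedDeriv 2 (fun x => ψ x p.2) p.1 := by
        rw [iteratedDeriv_two_eq, iteratedDeriv_two_eq]
        congr 1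
        funext x
        exact deriv_sub_const 1
      have hz : iteratedDeriv 2 (fun z => ψ p.1 z - 1) p.2
          = iteratedDeriv 2 (ψ p.1) p.2 := by
        rw [iteratedDeriv_two_eq, iteratedDeriv_two_eq]
        congr 1
        funext z
        exact deriv_sub_const 1
      rw [hx, hz]
      exact hpde p hp
    · intro q hq
      obtain ⟨h1u, hz0, hzu⟩ := hbd q hq
      have hb := hbc q hq
      show ψ q.1 q.2 - 1 ≤ 0
      rw [hb]
      have : (1 + q.2) / (1 + u q.1) ≤ 1 := (div_le_one h1u).2 hzu
      linarith
  -- lower bound: (1 + z) - ψ ≤ 0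
  have hlower : ∀ p ∈ OmegaRegion u, (1 + p.2) - ψ p.1 p.2 ≤ 0 := by
    refine subsol_nonpos ε hε u huc hu0 (fun x z => (1 + z) - ψ x z)
      ((continuous_const.add continuous_snd).continuousOn.sub hψc)
      ((contDiff_const.add contDiff_snd).contDiffOn.sub hψ2) ?_ ?_
    · intro p hp
      have hx : iteratedDeriv 2 (fun x => (1 + p.2) - ψ x p.2) p.1
          = -iteratedDeriv 2 (fun x => ψ x p.2) p.1 := by
        rw [iteratedDeriv_two_eq, iteratedDeriv_two_eq]
        have h1 : deriv (fun x => (1 + p.2) - ψ x p.2)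
            = fun x => -deriv (fun x => ψ x p.2) x := by
          funext x
          exact deriv_const_sub (1 + p.2)
        rw [h1]
        exact deriv.neg
      have hVopen : IsOpen {z : ℝ | (p.1, z) ∈ OmegaRegion u} :=
        hopen.preimage (by continuity)
      have hpV : p.2 ∈ {z : ℝ | (p.1, z) ∈ OmegaRegion u} := hp
      have hmlineC : ContDiffOn ℝ 2 (fun z => ψ p.1 z)
          {z : ℝ | (p.1, z) ∈ OmegaRegion u} :=
        hψ2.comp ((contDiff_const.prodMk contDiff_id).contDiffOn) (fun z hz => hz)
      have hz : iteratedDeriv 2 (fun z => (1 + z) - ψ p.1 z) p.2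
          = -iteratedDeriv 2 (ψ p.1) p.2 := by
        have hrw : (fun z => (1 + z) - ψ p.1 z)
            = (fun z => 1 + 1 * z + (-1) * ψ p.1 z) := by
          funext z; ring
        rw [hrw, iteratedDeriv_two_affine hVopen hpV hmlineC]
        ring
      rw [hx, hz]
      have := hpde p hp
      linarith
    · intro q hq
      obtain ⟨h1u, hz0, hzu⟩ := hbd q hq
      have hb := hbc q hq
      show (1 + q.2) - ψ q.1 q.2 ≤ 0
      rw [hb]
      have hmul : (1 + q.2) * (1 + u q.1) ≤ 1 + q.2 := by
        have hu1 : u q.1 ≤ 0 := hu0 q.1 ((closure_omega_subset huc hu0 hq.1).1.1)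
        nlinarith
      have := (le_div_iff₀ h1u).2 hmul
      linarith
  intro p hp
  exact ⟨by linarith [hlower p hp], by linarith [hupper p hp]⟩
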